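/- Let E : ℝ² → ℝ be twice continuously differentiable (C²). Then for all i, j ∈ {1,2,3}, the iterated Lie brackets of vector fields satisfy the symmetry relation [f_i, [f₀, f_j]] = [f_j, [f₀, f_i]] as functions on ℝ³. -/

import Mathlib

open VectorField

lemma const_bracket_symm {F : Type*} [NormedAddCommGroup F] [NormedSpace ℝ F]
    {f₀ : F → F} (h : ContDiff ℝ 2 f₀) (v w : F) :
    lieBracket ℝ (fun _ => v) (lieBracket ℝ f₀ (fun _ => w)) =
      lieBracket ℝ (fun _ => w) (lieBracket ℝ f₀ (fun _ => v)) := by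
  have hfd : Differentiable ℝ (fderiv ℝ f₀) :=
    (h.fderiv_right (m := 1) (by norm_num)).differentiable one_ne_zero
  have hb : ∀ u : F, lieBracket ℝ f₀ (fun _ => u) = fun x => -(fderiv ℝ f₀ x u) := by
    intro u; funext x; simp [lieBracket]
  have key : ∀ (u u' : F) (x : F),
      fderiv ℝ (fun y => fderiv ℝ f₀ y u) x u' = fderiv ℝ (fun y => fderiv ℝ f₀ y u') x u := by
    intro u u' x
    have h1 : ∀ z : F, fderiv ℝ (fun y => fderiv ℝ f₀ y z) x
        = (fderiv ℝ (fderiv ℝ f₀) x).flip z := by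
      intro z
      rw [fderiv_clm_apply (hfd x) (differentiableAt_const z)]
      simp
    rw [h1 u, h1 u']
    have := (h.contDiffAt (x := x)).isSymmSndFDerivAt (by simp)
    exact this u' u
  funext x
  rw [hb, hb]
  simp only [lieBracket, fderiv_const, fderiv_fun_const, Pi.zero_apply, ContinuousLinearMap.zero_apply, sub_zero]
  have hneg : ∀ (u u' : F), fderiv ℝ (fun y => -(fderiv ℝ f₀ y u)) x u'
      = -(fderiv ℝ (fun y => fderiv ℝ f₀ y u) x u') := by
    intro u u'
    rw [fderiv_fun_neg]
    simp
  rw [hneg, hneg, key]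

theorem stmt2 (α₁ α₂ α₃ β₁₁ β₁₂ β₁₃ β₂₂ β₂₂' β₃₂ β₃₃ : ℝ)
    (γ₁ γ₂ : Fin 3 → ℝ) (E : ℝ × ℝ → ℝ) (hE : ContDiff ℝ 2 E)
    (f₀ : ℝ × ℝ × ℝ → ℝ × ℝ × ℝ)
    (hf₀ : f₀ = fun p => (α₁ + β₁₁ * p.1 + β₁₂ * E (p.1, p.2.1),
      α₂ + β₂₂ * p.2.1 + β₂₂' * E (p.1, p.2.1) + β₁₃ * p.2.2,
      α₃ + β₃₂ * p.2.1 + β₃₃ * p.2.2))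
    (f : Fin 3 → ℝ × ℝ × ℝ → ℝ × ℝ × ℝ)
    (hf : f = fun j _ => (γ₁ j, γ₂ j, (0 : ℝ))) :
    ∀ i j : Fin 3,
      lieBracket ℝ (f i) (lieBracket ℝ f₀ (f j)) =
        lieBracket ℝ (f j) (lieBracket ℝ f₀ (f i)) := by
  have h2 : ContDiff ℝ 2 f₀ := by
    rw [hf₀]
    have hE' : ContDiff ℝ 2 (fun p : ℝ × ℝ × ℝ => E (p.1, p.2.1)) := by fun_prop
    fun_prop
  intro i j
  rw [hf]
  exact const_bracket_symm h2 _ _
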